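/- Let G be the group of fractions of a Garside monoid M with length-preserving relations and fundamental element δ. For every x ∈ G, ℓ_G(x) ≤ (2ℓ(δ) − 1)·ℓ(x), where ℓ is the minimal atom-length on G and ℓ_G the greedy length. -/

import Mathlib

/-- Minimal length of `x` as a word in the alphabet `A ∪ A⁻¹`. -/
noncomputable def minLen {G : Type*} [Group G] (A : Set G) (x : G) : ℕ :=
  sInf {n | ∃ L : List G, (∀ g ∈ L, g ∈ A ∨ g⁻¹ ∈ A) ∧ L.prod = x ∧ L.length = n}

lemma minLen_le_length {G : Type*} [Group G] (A : Set G) {x : G} (L : List G)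
    (h : ∀ g ∈ L, g ∈ A ∨ g⁻¹ ∈ A) (hp : L.prod = x) : minLen A x ≤ L.length :=
  Nat.sInf_le ⟨L, h, hp, rfl⟩

lemma minLen_one' {G : Type*} [Group G] (A : Set G) : minLen A (1 : G) = 0 :=
  Nat.eq_zero_of_le_zero (by
    simpa using minLen_le_length A ([] : List G) (by simp) (by simp))

lemma minLen_exists {G : Type*} [Group G] (A : Set G) {x : G}
    (h : ∃ L : List G, (∀ g ∈ L, g ∈ A ∨ g⁻¹ ∈ A) ∧ L.prod = x) :
    ∃ L : List G, (∀ g ∈ L, g ∈ A ∨ g⁻¹ ∈ A) ∧ L.prod = x ∧ L.length = minLen A x := by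
  obtain ⟨L, h1, h2⟩ := h
  have hmem : minLen A x ∈
      {n | ∃ L : List G, (∀ g ∈ L, g ∈ A ∨ g⁻¹ ∈ A) ∧ L.prod = x ∧ L.length = n} :=
    Nat.sInf_mem ⟨L.length, L, h1, h2, rfl⟩
  obtain ⟨L', hL1, hL2, hL3⟩ := hmem
  exact ⟨L', hL1, hL2, hL3⟩

lemma prod_filter_ne_one {G : Type*} [Group G] [DecidableEq G] :
    ∀ L : List G, (L.filter (fun g => !decide (g = 1))).prod = L.prod
  | [] => rfl
  | g :: L => by
    rw [List.filter_cons]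
    by_cases h : g = 1
    · subst h; simp [prod_filter_ne_one L]
    · simp [h, prod_filter_ne_one L]

/-- Let `G` be the group of fractions of a Garside monoid `M` with
length-preserving relations, atom set `A`, and fundamental element `δ`.  For every
`x ∈ G`, `ℓ_G(x) ≤ (2ℓ(δ) − 1)·ℓ(x)`, where `ℓ = minLen A` is the minimal length over
the atoms and their inverses and `ℓG` is the greedy length. -/
theorem greedy_le_quasigeodesic {G : Type*} [Group G]
    (M : Submonoid G) (A : Set G) (δ : G) (simple : G → Prop)
    (wedge : G → G → G) (ℓG ℓR : G → ℕ)
    -- M is generated by the atoms, and the relations are length preserving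
    (hgen : Submonoid.closure A = M)
    (hadd : ∀ a ∈ M, ∀ b ∈ M, minLen A (a * b) = minLen A a + minLen A b)
    -- simple elements: positive, left-dividing δ, with simple complements
    (hatom_simple : ∀ a ∈ A, simple a)
    (hsimple_pos : ∀ s : G, simple s → s ∈ M)
    (hδ_simple : simple δ)
    (hcompl : ∀ s : G, simple s → ∃ c : G, simple c ∧ s * c = δ)
    (hcompl' : ∀ s : G, simple s → ∃ c : G, simple c ∧ c * s = δ)
    -- `wedge` is the left gcd on positive elements
    (hwedge : ∀ a ∈ M, ∀ b ∈ M, wedge a b ∈ M ∧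
      (∃ c ∈ M, wedge a b * c = a) ∧ (∃ c ∈ M, wedge a b * c = b) ∧
      ∀ d ∈ M, (∃ c ∈ M, d * c = a) → (∃ c ∈ M, d * c = b) →
        ∃ c ∈ M, d * c = wedge a b)
    -- greedy normal form `x = δ^k p₁⋯p_r` and the greedy length
    (hG : ∀ x : G, ∃ (k : ℤ) (P : List G),
      (∀ p ∈ P, simple p ∧ p ≠ δ ∧ p ≠ 1) ∧
      List.Chain' (fun a b => wedge (a⁻¹ * δ) b = 1) P ∧
      x = δ ^ k * P.prod ∧
      ℓG x = k.natAbs * minLen A δ + (P.map (minLen A)).sum)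
    -- rational normal form `x = (s₁⋯s_k)⁻¹(p₁⋯p_l)` and the rational length
    (hR : ∀ x : G, ∃ U V : List G,
      (∀ s ∈ U ++ V, simple s ∧ s ≠ 1) ∧
      List.Chain' (fun a b => wedge (a⁻¹ * δ) b = 1) U ∧
      List.Chain' (fun a b => wedge (a⁻¹ * δ) b = 1) V ∧
      wedge U.prod V.prod = 1 ∧
      x = U.prod⁻¹ * V.prod ∧
      ℓR x = ((U ++ V).map (minLen A)).sum) :
    ∀ x : G, ℓG x ≤ (2 * minLen A δ - 1) * minLen A x := by
  classical
  letI : DecidableEq G := Classical.decEq G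
  -- ## Basic facts about `minLen` on `M`
  have hAM : A ⊆ (M : Set G) := by
    intro a ha; rw [← hgen]; exact Submonoid.subset_closure ha
  have hrepr : ∀ c ∈ M, ∃ L : List G, (∀ g ∈ L, g ∈ A) ∧ L.prod = c := by
    intro c hc
    rw [← hgen] at hc
    obtain ⟨L, h1, h2⟩ := Submonoid.exists_list_of_mem_closure hc
    exact ⟨L, h1, h2⟩
  have hreprW : ∀ c ∈ M, ∃ L : List G, (∀ g ∈ L, g ∈ A ∨ g⁻¹ ∈ A) ∧ L.prod = c := by
    intro c hc
    obtain ⟨L, h1, h2⟩ := hrepr c hc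
    exact ⟨L, fun g hg => Or.inl (h1 g hg), h2⟩
  have hreprInv : ∀ c ∈ M, ∃ L : List G, (∀ g ∈ L, g ∈ A ∨ g⁻¹ ∈ A) ∧ L.prod = c⁻¹ := by
    intro c hc
    obtain ⟨L, h1, h2⟩ := hrepr c hc
    refine ⟨(L.map fun z => z⁻¹).reverse, ?_, ?_⟩
    · intro g hg
      rw [List.mem_reverse, List.mem_map] at hg
      obtain ⟨a, ha, rfl⟩ := hg
      exact Or.inr (by simpa using h1 a ha)
    · rw [← List.prod_inv_reverse, h2]
  have eq_one_of_len : ∀ c ∈ M, minLen A c = 0 → c = 1 := by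
    intro c hc h0
    obtain ⟨L, _, hp, hl⟩ := minLen_exists A (hreprW c hc)
    rw [h0, List.length_eq_zero_iff] at hl
    rw [← hp, hl, List.prod_nil]
  have one_le_len : ∀ c ∈ M, c ≠ 1 → 1 ≤ minLen A c := by
    intro c hc hne
    rcases Nat.eq_zero_or_pos (minLen A c) with h | h
    · exact absurd (eq_one_of_len c hc h) hne
    · exact h
  have hδM : δ ∈ M := hsimple_pos δ hδ_simple
  have triv_of_le_one : ∀ t ∈ M, (∃ c ∈ M, t * c = 1) → t = 1 := by
    intro t ht ⟨c, hc, htc⟩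
    apply eq_one_of_len t ht
    have h := hadd t ht c hc
    rw [htc, minLen_one'] at h
    omega
  have hdvd_antisymm : ∀ a ∈ M, ∀ b ∈ M,
      (∃ c ∈ M, a * c = b) → (∃ c ∈ M, b * c = a) → a = b := by
    intro a ha b hb ⟨c, hc, hac⟩ ⟨d, hd, hbd⟩
    have h1 : a * (c * d) = a * 1 := by rw [← mul_assoc, hac, hbd, mul_one]
    have h2 : c * d = 1 := mul_left_cancel h1
    have hc1 : c = 1 := triv_of_le_one c hc ⟨d, hd, h2⟩
    rw [← hac, hc1, mul_one]
  have hcomp : ∀ s : G, simple s → simple (s⁻¹ * δ) ∧ s * (s⁻¹ * δ) = δ := by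
    intro s hs
    obtain ⟨c, hc, hsc⟩ := hcompl s hs
    have hce : c = s⁻¹ * δ := by rw [← hsc]; group
    exact ⟨hce ▸ hc, by group⟩
  have hcompM : ∀ s : G, simple s → s⁻¹ * δ ∈ M := fun s hs => hsimple_pos _ (hcomp s hs).1
  have hsimple_le_δ : ∀ s : G, simple s → ∃ c ∈ M, s * c = δ :=
    fun s hs => ⟨s⁻¹ * δ, hcompM s hs, (hcomp s hs).2⟩
  -- ## Conjugation by `δ` preserves `M` and length
  have hτ : ∀ c ∈ M, ∃ c' ∈ M, δ * c = c' * δ ∧ minLen A c' = minLen A c := by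
    intro c hc
    rw [← hgen] at hc
    induction hc using Submonoid.closure_induction with
    | mem a ha =>
      have hsa := hatom_simple a ha
      obtain ⟨c₁, hc₁, h1⟩ := hcompl' a hsa
      obtain ⟨e, he, h2⟩ := hcompl' c₁ hc₁
      refine ⟨e, hsimple_pos e he, ?_, ?_⟩
      · have ha' : a = c₁⁻¹ * δ := by rw [← h1]; group
        have he' : e = δ * c₁⁻¹ := by rw [← h2]; group
        rw [ha', he']; group
      · have l1 : minLen A e + minLen A c₁ = minLen A δ := by
          rw [← hadd e (hsimple_pos e he) c₁ (hsimple_pos c₁ hc₁), h2]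
        have l2 : minLen A c₁ + minLen A a = minLen A δ := by
          rw [← hadd c₁ (hsimple_pos c₁ hc₁) a (hsimple_pos a hsa), h1]
        omega
    | one => exact ⟨1, one_mem M, by group, rfl⟩
    | mul x y hx hy ihx ihy =>
      obtain ⟨x', hx', ex, lx⟩ := ihx
      obtain ⟨y', hy', ey, ly⟩ := ihy
      have hxM : x ∈ M := by rw [← hgen]; exact hx
      have hyM : y ∈ M := by rw [← hgen]; exact hy
      refine ⟨x' * y', mul_mem hx' hy', ?_, ?_⟩
      · calc δ * (x * y) = (δ * x) * y := by group
          _ = x' * (δ * y) := by rw [ex]; group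
          _ = x' * (y' * δ) := by rw [ey]
          _ = (x' * y') * δ := by group
      · rw [hadd x' hx' y' hy', hadd x hxM y hyM, lx, ly]
  have hτpow : ∀ (m : ℕ), ∀ c ∈ M, ∃ c' ∈ M,
      δ ^ m * c = c' * δ ^ m ∧ minLen A c' = minLen A c := by
    intro m
    induction m with
    | zero => intro c hc; exact ⟨c, hc, by simp, rfl⟩
    | succ p ih =>
      intro c hc
      obtain ⟨c₁, h1, e1, l1⟩ := hτ c hc
      obtain ⟨c₂, h2, e2, l2⟩ := ih c₁ h1
      refine ⟨c₂, h2, ?_, l2.trans l1⟩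
      calc δ ^ (p + 1) * c = δ ^ p * (δ * c) := by rw [pow_succ]; group
        _ = δ ^ p * (c₁ * δ) := by rw [e1]
        _ = (δ ^ p * c₁) * δ := by group
        _ = (c₂ * δ ^ p) * δ := by rw [e2]
        _ = c₂ * δ ^ (p + 1) := by rw [pow_succ]; group
  -- ## Rewriting a word over `A ∪ A⁻¹` as `δ^{-m} y` with `y` positive
  have hword : ∀ L : List G, (∀ g ∈ L, g ∈ A ∨ g⁻¹ ∈ A) → (∀ g ∈ L, g ≠ 1) →
      ∃ (m : ℕ) (y : G), y ∈ M ∧ L.prod = (δ ^ m)⁻¹ * y ∧ m ≤ L.length ∧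
        minLen A y + 2 * m ≤ L.length + m * minLen A δ := by
    intro L
    induction L with
    | nil =>
      intro _ _
      exact ⟨0, 1, one_mem M, by simp, le_refl _, by simp [minLen_one']⟩
    | cons g L ih =>
      intro h1 h2
      obtain ⟨m, y, hy, hprod, hm, hlen⟩ :=
        ih (fun g' hg' => h1 g' (List.mem_cons_of_mem _ hg'))
           (fun g' hg' => h2 g' (List.mem_cons_of_mem _ hg'))
      rcases h1 g (List.mem_cons_self) with hga | hgi
      · -- positive letter
        obtain ⟨g', hg', eg, lg⟩ := hτpow m g (hAM hga)
        refine ⟨m, g' * y, mul_mem hg' hy, ?_, Nat.le_succ_of_le hm, ?_⟩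
        · have key : g * (δ ^ m)⁻¹ = (δ ^ m)⁻¹ * g' := by
            rw [mul_inv_eq_iff_eq_mul, mul_assoc, ← eg, inv_mul_cancel_left]
          calc (g :: L).prod = g * L.prod := List.prod_cons
            _ = g * ((δ ^ m)⁻¹ * y) := by rw [hprod]
            _ = (g * (δ ^ m)⁻¹) * y := (mul_assoc _ _ _).symm
            _ = ((δ ^ m)⁻¹ * g') * y := by rw [key]
            _ = (δ ^ m)⁻¹ * (g' * y) := mul_assoc _ _ _
        · have e1 : minLen A (g' * y) = minLen A g' + minLen A y := hadd _ hg' _ hy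
          have e2 : minLen A g ≤ 1 :=
            minLen_le_length A [g] (by simp [hga]) (by simp)
          rw [List.length_cons, e1, lg]
          generalize m * minLen A δ = t at hlen ⊢
          omega
      · -- inverse letter
        have hsa : simple g⁻¹ := hatom_simple _ hgi
        have hcs := hcomp g⁻¹ hsa
        set c := (g⁻¹)⁻¹ * δ with hcdef
        have hcM : c ∈ M := hsimple_pos c hcs.1
        have hc_eq : c = g * δ := by rw [hcdef, inv_inv]
        have hg_eq : g = c * δ⁻¹ := by rw [hc_eq]; group
        obtain ⟨c', hc', ec, lc⟩ := hτpow (m + 1) c hcM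
        refine ⟨m + 1, c' * y, mul_mem hc' hy, ?_,
          by simp only [List.length_cons]; omega, ?_⟩
        · have key : c * (δ ^ (m + 1))⁻¹ = (δ ^ (m + 1))⁻¹ * c' := by
            rw [mul_inv_eq_iff_eq_mul, mul_assoc, ← ec, inv_mul_cancel_left]
          calc (g :: L).prod = g * L.prod := List.prod_cons
            _ = (c * δ⁻¹) * ((δ ^ m)⁻¹ * y) := by rw [hprod, hg_eq]
            _ = (c * (δ ^ (m + 1))⁻¹) * y := by rw [pow_succ]; group
            _ = ((δ ^ (m + 1))⁻¹ * c') * y := by rw [key]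
            _ = (δ ^ (m + 1))⁻¹ * (c' * y) := mul_assoc _ _ _
        · have e1 : minLen A (c' * y) = minLen A c' + minLen A y := hadd _ hc' _ hy
          have e2 : minLen A g⁻¹ + minLen A c = minLen A δ := by
            rw [← hadd g⁻¹ (hAM hgi) c hcM, hcs.2]
          have e3 : 1 ≤ minLen A g⁻¹ := by
            refine one_le_len g⁻¹ (hAM hgi) ?_
            simpa using h2 g (List.mem_cons_self)
          have e4 : (m + 1) * minLen A δ = m * minLen A δ + minLen A δ := by ring
          rw [List.length_cons, e1, lc, e4]
          generalize m * minLen A δ = t at hlen ⊢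
          omega
  -- ## Length of positive products
  have hpowlen : ∀ q : ℕ, minLen A (δ ^ q) = q * minLen A δ := by
    intro q
    induction q with
    | zero => simp [minLen_one']
    | succ p ih =>
      rw [pow_succ, hadd _ (pow_mem hδM p) _ hδM, ih]; ring
  have hlistlen : ∀ P : List G, (∀ p ∈ P, p ∈ M) →
      minLen A P.prod = (P.map (minLen A)).sum := by
    intro P
    induction P with
    | nil => intro _; simp [minLen_one']
    | cons p P ih =>
      intro h
      rw [List.prod_cons,
        hadd p (h p (List.mem_cons_self))
          _ (Submonoid.list_prod_mem M fun z hz => h z (List.mem_cons_of_mem _ hz)),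
        List.map_cons, List.sum_cons, ih (fun z hz => h z (List.mem_cons_of_mem _ hz))]
  -- ## Main argument
  intro x
  obtain ⟨k, P, hP, hchain, hx, hlenx⟩ := hG x
  have hPM : ∀ p ∈ P, p ∈ M := fun p hp => hsimple_pos p (hP p hp).1
  have hPprodM : P.prod ∈ M := Submonoid.list_prod_mem M hPM
  by_cases hδ1 : δ = 1
  · -- degenerate case
    have hPnil : P = [] := by
      cases P with
      | nil => rfl
      | cons p P' =>
        exfalso
        obtain ⟨cp, hcp, hpc⟩ := hsimple_le_δ p (hP p (by simp)).1
        rw [hδ1] at hpc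
        exact (hP p (by simp)).2.2
          (triv_of_le_one p (hPM p (by simp)) ⟨cp, hcp, hpc⟩)
    rw [hlenx, hPnil, hδ1]
    simp [minLen_one']
  · -- the Garside head lemma: `δ` does not left-divide a left-weighted product
    have halpha : ∀ s : G, simple s → ∀ w ∈ M,
        wedge δ (s * w) = s * wedge (s⁻¹ * δ) w := by
      intro s hs w hw
      have hsM := hsimple_pos s hs
      have hswM : s * w ∈ M := mul_mem hsM hw
      have hcsM : s⁻¹ * δ ∈ M := hcompM s hs
      obtain ⟨hgM, ⟨cδ, hcδ, hgδ⟩, ⟨cw, hcw, hgw⟩, hguniv⟩ := hwedge δ hδM (s * w) hswM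
      obtain ⟨hWM, hWa, hWb, hWuniv⟩ := hwedge (s⁻¹ * δ) hcsM w hw
      obtain ⟨u, hu, hsu⟩ :=
        hguniv s hsM ⟨s⁻¹ * δ, hcsM, (hcomp s hs).2⟩ ⟨w, hw, rfl⟩
      have hu1 : u * cδ = s⁻¹ * δ := by rw [← hgδ, ← hsu]; group
      have hu2 : u * cw = w := by
        have h : s * (u * cw) = s * w := by rw [← mul_assoc, hsu, hgw]
        exact mul_left_cancel h
      obtain ⟨v, hv, huv⟩ := hWuniv u hu ⟨cδ, hcδ, hu1⟩ ⟨cw, hcw, hu2⟩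
      have hsWg : ∃ v ∈ M, (s * wedge (s⁻¹ * δ) w) * v = wedge δ (s * w) := by
        apply hguniv _ (mul_mem hsM hWM)
        · obtain ⟨e1, he1, hW1⟩ := hWa
          exact ⟨e1, he1, by rw [mul_assoc, hW1]; exact (hcomp s hs).2⟩
        · obtain ⟨e2, he2, hW2⟩ := hWb
          exact ⟨e2, he2, by rw [mul_assoc, hW2]⟩
      refine hdvd_antisymm _ hgM _ (mul_mem hsM hWM) ⟨v, hv, ?_⟩ hsWg
      rw [← hsu, mul_assoc, huv]
    have hhead : ∀ (P : List G) (p : G), (∀ q ∈ p :: P, simple q) →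
        List.Chain' (fun a b => wedge (a⁻¹ * δ) b = 1) (p :: P) →
        wedge δ (p :: P).prod = p := by
      intro P
      induction P with
      | nil =>
        intro p hp _
        have hsp : simple p := hp p (by simp)
        have hpM := hsimple_pos p hsp
        simp only [List.prod_cons, List.prod_nil, mul_one]
        obtain ⟨hgM, _, ⟨c2, hc2, h2⟩, huniv⟩ := hwedge δ hδM p hpM
        exact hdvd_antisymm _ hgM _ hpM ⟨c2, hc2, h2⟩
          (huniv p hpM (hsimple_le_δ p hsp) ⟨1, one_mem M, mul_one p⟩)
      | cons q P ih =>
        intro p hp hchain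
        have hsp : simple p := hp p (by simp)
        have hZM : (q :: P).prod ∈ M :=
          Submonoid.list_prod_mem M (fun z hz =>
            hsimple_pos z (hp z (List.mem_cons_of_mem _ hz)))
        obtain ⟨hpq, hchain'⟩ := List.isChain_cons_cons.mp hchain
        have IH : wedge δ (q :: P).prod = q :=
          ih q (fun z hz => hp z (List.mem_cons_of_mem _ hz)) hchain'
        rw [List.prod_cons, halpha p hsp _ hZM]
        suffices h : wedge (p⁻¹ * δ) (q :: P).prod = 1 by rw [h, mul_one]
        have hpδM : p⁻¹ * δ ∈ M := hcompM p hsp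
        obtain ⟨htM, ⟨u1, hu1, ht1⟩, ⟨u2, hu2, ht2⟩, _⟩ :=
          hwedge (p⁻¹ * δ) hpδM _ hZM
        have htδ : ∃ c ∈ M, wedge (p⁻¹ * δ) (q :: P).prod * c = δ := by
          obtain ⟨cc, hccM, hcc⟩ := hsimple_le_δ _ (hcomp p hsp).1
          exact ⟨u1 * cc, mul_mem hu1 hccM, by rw [← mul_assoc, ht1, hcc]⟩
        obtain ⟨_, _, _, hδZuniv⟩ := hwedge δ hδM _ hZM
        have htq : ∃ c ∈ M, wedge (p⁻¹ * δ) (q :: P).prod * c = q := by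
          have h := hδZuniv _ htM htδ ⟨u2, hu2, ht2⟩
          rwa [IH] at h
        obtain ⟨_, _, _, hpquniv⟩ :=
          hwedge (p⁻¹ * δ) hpδM q (hsimple_pos q (hp q (by simp)))
        have ht1' := hpquniv _ htM ⟨u1, hu1, ht1⟩ htq
        rw [hpq] at ht1'
        exact triv_of_le_one _ htM ht1'
    have hnodiv : ∀ (P : List G), (∀ p ∈ P, simple p ∧ p ≠ δ ∧ p ≠ 1) →
        List.Chain' (fun a b => wedge (a⁻¹ * δ) b = 1) P →
        ∀ c ∈ M, δ * c ≠ P.prod := by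
      intro P hP hch c hcM heq
      cases P with
      | nil =>
        simp only [List.prod_nil] at heq
        exact hδ1 (triv_of_le_one δ hδM ⟨c, hcM, heq⟩)
      | cons p P' =>
        have hprodM : (p :: P').prod ∈ M :=
          Submonoid.list_prod_mem M (fun z hz => hsimple_pos z (hP z hz).1)
        have hw := hhead P' p (fun z hz => (hP z hz).1) hch
        obtain ⟨hgM, _, _, huniv⟩ := hwedge δ hδM (p :: P').prod hprodM
        have hδp : ∃ e ∈ M, δ * e = wedge δ (p :: P').prod :=
          huniv δ hδM ⟨1, one_mem M, mul_one δ⟩ ⟨c, hcM, heq⟩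
        rw [hw] at hδp
        have hpδ : p = δ :=
          hdvd_antisymm p (hsimple_pos p (hP p (by simp)).1) δ hδM
            (hsimple_le_δ p (hP p (by simp)).1) hδp
        exact (hP p (by simp)).2.1 hpδ
    -- a word for `x`
    have hx_word : ∃ L : List G, (∀ g ∈ L, g ∈ A ∨ g⁻¹ ∈ A) ∧ L.prod = x := by
      obtain ⟨LP, hLP1, hLP2⟩ := hreprW P.prod hPprodM
      rcases le_or_gt 0 k with hk | hk
      · obtain ⟨LD, hLD1, hLD2⟩ := hreprW (δ ^ k.toNat) (pow_mem hδM _)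
        refine ⟨LD ++ LP, ?_, ?_⟩
        · intro g hg
          rcases List.mem_append.mp hg with h | h
          exacts [hLD1 g h, hLP1 g h]
        · rw [List.prod_append, hLD2, hLP2, hx, ← zpow_natCast δ k.toNat,
            Int.toNat_of_nonneg hk]
      · obtain ⟨LD, hLD1, hLD2⟩ := hreprInv (δ ^ (-k).toNat) (pow_mem hδM _)
        refine ⟨LD ++ LP, ?_, ?_⟩
        · intro g hg
          rcases List.mem_append.mp hg with h | h
          exacts [hLD1 g h, hLP1 g h]
        · rw [List.prod_append, hLD2, hLP2, hx]
          congr 1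
          rw [← zpow_natCast δ (-k).toNat, Int.toNat_of_nonneg (by omega : (0:ℤ) ≤ -k),
            zpow_neg, inv_inv]
    obtain ⟨L0, hL0A, hL0p, hL0len⟩ := minLen_exists A hx_word
    set L := L0.filter (fun g => !decide (g = 1)) with hLdef
    have hLA : ∀ g ∈ L, g ∈ A ∨ g⁻¹ ∈ A :=
      fun g hg => hL0A g (List.mem_of_mem_filter hg)
    have hLne : ∀ g ∈ L, g ≠ 1 := by
      intro g hg
      have h := List.of_mem_filter hg
      simpa using h
    have hLp : L.prod = x := by
      rw [hLdef, prod_filter_ne_one, hL0p]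
    have hLlen : L.length ≤ minLen A x := by
      rw [← hL0len]; exact List.length_filter_le _ _
    obtain ⟨m, y, hyM, hprodL, hmlen, hylen⟩ := hword L hLA hLne
    have hmn : m ≤ minLen A x := le_trans hmlen hLlen
    have hy_eq : y = δ ^ m * x := by
      rw [← hLp, hprodL, mul_inv_cancel_left]
    have hy2 : y = δ ^ ((m : ℤ) + k) * P.prod := by
      rw [hy_eq, hx, ← mul_assoc]
      congr 1
      rw [← zpow_natCast δ m, ← zpow_add]
    rcases le_or_gt 0 ((m : ℤ) + k) with hmk | hmk
    · -- the normal form has no extra `δ`'s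
      set q := ((m : ℤ) + k).toNat with hq
      have hy3 : y = δ ^ q * P.prod := by
        rw [hy2]
        congr 1
        rw [← zpow_natCast δ q, hq, Int.toNat_of_nonneg hmk]
      have hylen2 : minLen A y = q * minLen A δ + (P.map (minLen A)).sum := by
        rw [hy3, hadd _ (pow_mem hδM q) _ hPprodM, hpowlen, hlistlen P hPM]
      have hk_le : k.natAbs ≤ q + m := by omega
      have t1 : k.natAbs * minLen A δ ≤ (q + m) * minLen A δ :=
        Nat.mul_le_mul_right _ hk_le
      have A1 : ℓG x + 2 * m ≤ minLen A x + 2 * (m * minLen A δ) := by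
        calc ℓG x + 2 * m
            = k.natAbs * minLen A δ + (P.map (minLen A)).sum + 2 * m := by rw [hlenx]
          _ ≤ (q + m) * minLen A δ + (P.map (minLen A)).sum + 2 * m :=
              Nat.add_le_add_right (Nat.add_le_add_right t1 _) _
          _ = (minLen A y + 2 * m) + m * minLen A δ := by rw [hylen2]; ring
          _ ≤ (L.length + m * minLen A δ) + m * minLen A δ :=
              Nat.add_le_add_right hylen _
          _ ≤ (minLen A x + m * minLen A δ) + m * minLen A δ :=
              Nat.add_le_add_right (Nat.add_le_add_right hLlen _) _
          _ = minLen A x + 2 * (m * minLen A δ) := by ring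
      obtain ⟨e, hd⟩ : ∃ e, minLen A δ = e + 1 :=
        ⟨minLen A δ - 1, by have := one_le_len δ hδM hδ1; omega⟩
      rw [hd] at A1
      have E3 : 2 * (m * (e + 1)) = 2 * (m * e) + 2 * m := by ring
      rw [E3] at A1
      have A2 : m * e ≤ minLen A x * e := Nat.mul_le_mul_right e hmn
      have E4 : (2 * minLen A δ - 1) * minLen A x
          = 2 * (minLen A x * e) + minLen A x := by
        rw [hd]
        have h : 2 * (e + 1) - 1 = 2 * e + 1 := by omega
        rw [h]; ring
      rw [E4]
      generalize m * e = X at A1 A2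
      generalize minLen A x * e = Y at A2 ⊢
      omega
    · -- impossible: `δ` would divide the left-weighted product
      exfalso
      have hj : (0 : ℤ) ≤ -((m : ℤ) + k) := by omega
      set j := (-((m : ℤ) + k)).toNat with hjdef
      have hj1 : 1 ≤ j := by omega
      have hPp : P.prod = δ ^ j * y := by
        rw [hy2, ← mul_assoc, ← zpow_natCast δ j, hjdef, Int.toNat_of_nonneg hj,
          ← zpow_add, neg_add_cancel, zpow_zero, one_mul]
      obtain ⟨j', hj'⟩ : ∃ j', j = j' + 1 := ⟨j - 1, by omega⟩
      rw [hj'] at hPp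
      refine hnodiv P hP hchain (δ ^ j' * y) (mul_mem (pow_mem hδM j') hyM) ?_
      rw [hPp, ← mul_assoc, ← pow_succ']
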